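/- Let k ≥ 1 and x_1,…,x_{2k-1} ∈ [0,1]. Let Q(x_1,…,x_{2k-1}) be the probability that independent uniform random variables y_1,…,y_{2k-1} ∈ [0,1] satisfy y_i < x_i for at least k indices i. Then Q(x_1,…,x_{2k-1}) ≤ σ_k(x_1,…,x_{2k-1}). -/

import Mathlib

open MeasureTheory

def esymm (m ℓ : ℕ) (x : Fin m → ℝ) : ℝ :=
  ∑ I ∈ Finset.powersetCard ℓ (Finset.univ : Finset (Fin m)), ∏ i ∈ I, x i

/-- `Q k x` is the probability that independent uniform random variables
`y i ∈ [0,1]` satisfy `y i < x i` for at least `k` indices `i`. -/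
noncomputable def Q (k : ℕ) (x : Fin (2*k-1) → ℝ) : ℝ :=
  (volume {y : Fin (2*k-1) → ℝ |
      (∀ i, y i ∈ Set.Icc (0:ℝ) 1) ∧
        k ≤ (Finset.univ.filter (fun i => y i < x i)).card}).toReal

theorem Q_le_esymm (k : ℕ) (hk : 1 ≤ k) (x : Fin (2*k-1) → ℝ)
    (hx : ∀ i, x i ∈ Set.Icc (0:ℝ) 1) :
    Q k x ≤ esymm (2*k-1) k x := by
  have hx0 : ∀ i, 0 ≤ x i := fun i => (hx i).1
  have hes : 0 ≤ esymm (2*k-1) k x :=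
    Finset.sum_nonneg fun I _ => Finset.prod_nonneg fun i _ => hx0 i
  refine ENNReal.toReal_le_of_le_ofReal hes ?_
  have hsub : {y : Fin (2*k-1) → ℝ |
      (∀ i, y i ∈ Set.Icc (0:ℝ) 1) ∧
        k ≤ (Finset.univ.filter (fun i => y i < x i)).card} ⊆
      ⋃ I ∈ Finset.powersetCard k (Finset.univ : Finset (Fin (2*k-1))),
        Set.pi Set.univ (fun i => if i ∈ I then Set.Ico 0 (x i) else Set.Icc (0:ℝ) 1) := by
    intro y hy
    obtain ⟨hy1, hy2⟩ := hy
    obtain ⟨I, hIsub, hIcard⟩ :=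
      Finset.exists_subset_card_eq hy2
    refine Set.mem_iUnion₂.mpr ⟨I, Finset.mem_powersetCard.mpr ⟨Finset.subset_univ I, hIcard⟩, ?_⟩
    intro i _
    by_cases hi : i ∈ I
    · simp only [hi, if_true]
      exact ⟨(hy1 i).1, (Finset.mem_filter.mp (hIsub hi)).2⟩
    · simpa only [hi, if_false] using hy1 i
  calc (volume {y : Fin (2*k-1) → ℝ |
      (∀ i, y i ∈ Set.Icc (0:ℝ) 1) ∧
        k ≤ (Finset.univ.filter (fun i => y i < x i)).card})
      ≤ ∑ I ∈ Finset.powersetCard k (Finset.univ : Finset (Fin (2*k-1))),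
          volume (Set.pi Set.univ
            (fun i => if i ∈ I then Set.Ico 0 (x i) else Set.Icc (0:ℝ) 1)) :=
        (measure_mono hsub).trans (measure_biUnion_finset_le _ _)
    _ = ∑ I ∈ Finset.powersetCard k (Finset.univ : Finset (Fin (2*k-1))),
          ENNReal.ofReal (∏ i ∈ I, x i) := by
        refine Finset.sum_congr rfl fun I hI => ?_
        rw [volume_pi_pi]
        have : ∀ i : Fin (2*k-1),
            volume (if i ∈ I then Set.Ico 0 (x i) else Set.Icc (0:ℝ) 1)
              = if i ∈ I then ENNReal.ofReal (x i) else 1 := by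
          intro i
          by_cases hi : i ∈ I
          · simp [hi, Real.volume_Ico]
          · simp [hi, Real.volume_Icc]
        rw [Finset.prod_congr rfl fun i _ => this i, Finset.prod_ite_mem,
          Finset.univ_inter, ← ENNReal.ofReal_prod_of_nonneg fun i _ => hx0 i]
    _ = ENNReal.ofReal (esymm (2*k-1) k x) := by
        rw [esymm, ENNReal.ofReal_sum_of_nonneg fun I _ => Finset.prod_nonneg fun i _ => hx0 i]
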